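/- Let 2 ≤ k ≤ m ≤ d be integers with d ≥ C(m,k) - 1 + m. Then n(k,d) ≥ (d - C(m,k) + 1)^k · C(m,k) / m^k. -/

import Mathlib

open Finset

/-- Number of coordinates where one string has 0 and the other 1. -/
def Dd {d : ℕ} (x y : Fin d → Option Bool) : ℕ :=
  (univ.filter fun i => ∃ b : Bool, x i = some b ∧ y i = some !b).card

/-- The subcube of binary strings agreeing with `x` on all non-joker coordinates. -/
def Hcube {d : ℕ} (x : Fin d → Option Bool) : Finset (Fin d → Bool) :=
  univ.filter fun u => ∀ i : Fin d, ∀ b : Bool, x i = some b → u i = b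

/-- Number of joker (`*`) coordinates of `x`. -/
def jok {d : ℕ} (x : Fin d → Option Bool) : ℕ :=
  (univ.filter fun i => x i = none).card

/-- `k`-neighborly family of strings in `{0,1,*}^d`. -/
def Nbly {d : ℕ} (k : ℕ) (F : Finset (Fin d → Option Bool)) : Prop :=
  ∀ x ∈ F, ∀ y ∈ F, x ≠ y → 1 ≤ Dd x y ∧ Dd x y ≤ k

/-- `n(k,d)`: maximum size of a `k`-neighborly family in `{0,1,*}^d`. -/
noncomputable def nbox (k d : ℕ) : ℕ :=
  sSup {n | ∃ F : Finset (Fin d → Option Bool), Nbly k F ∧ F.card = n}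



section AuxNB

/-- Signature index of a `k`-subset of `Fin m`. -/
noncomputable def NIdx (k m : ℕ) (S : Finset (Fin m)) : ℕ :=
  if h : S ∈ powersetCard k (univ : Finset (Fin m)) then
    ((powersetCard k (univ : Finset (Fin m))).equivFin ⟨S, h⟩ : ℕ)
  else 0

lemma NIdx_lt {k m : ℕ} {S : Finset (Fin m)} (h : S ∈ powersetCard k (univ : Finset (Fin m))) :
    NIdx k m S < m.choose k := by
  have h2 : #(powersetCard k (univ : Finset (Fin m))) = m.choose k := by
    rw [card_powersetCard, card_univ, Fintype.card_fin]
  have := ((powersetCard k (univ : Finset (Fin m))).equivFin ⟨S, h⟩).isLt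
  simp only [NIdx, dif_pos h]
  exact h2 ▸ this

lemma NIdx_inj {k m : ℕ} {S S' : Finset (Fin m)} (h : S ∈ powersetCard k (univ : Finset (Fin m)))
    (h' : S' ∈ powersetCard k (univ : Finset (Fin m))) (he : NIdx k m S = NIdx k m S') : S = S' := by
  simp only [NIdx, dif_pos h, dif_pos h'] at he
  have := (powersetCard k (univ : Finset (Fin m))).equivFin.injective (Fin.val_injective he)
  exact congrArg Subtype.val this

/-- Construction string: signature `n` on first `C-1` coords, threshold patterns on blocks. -/
def strB (d C q m n : ℕ) (S : Finset (Fin m)) (f : Fin m → Fin (q+1)) : Fin d → Option Bool :=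
  fun c =>
    if (c : ℕ) < C - 1 then
      (if (c : ℕ) < n then some true else if (c : ℕ) = n then some false else none)
    else if (c : ℕ) < C - 1 + m * q then
      (if hi : ((c : ℕ) - (C-1)) / q < m then
        (if (⟨((c : ℕ) - (C-1)) / q, hi⟩ : Fin m) ∈ S then
          (if ((c : ℕ) - (C-1)) % q < (f ⟨((c : ℕ) - (C-1)) / q, hi⟩ : ℕ) then some true
           else if ((c : ℕ) - (C-1)) % q = (f ⟨((c : ℕ) - (C-1)) / q, hi⟩ : ℕ) then some false
           else none)
        else none)
      else none)
    else none

lemma strB_block {d C q m n : ℕ} (hq : 0 < q) {S : Finset (Fin m)} {f : Fin m → Fin (q+1)}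
    (i : Fin m) (t : ℕ) (ht : t < q) (c : Fin d) (hc : (c : ℕ) = C - 1 + (i : ℕ) * q + t) :
    strB d C q m n S f c =
      (if i ∈ S then
        (if t < (f i : ℕ) then some true else if t = (f i : ℕ) then some false else none)
       else none) := by
  have hiq : (i : ℕ) * q = q * (i : ℕ) := Nat.mul_comm _ _
  have hmul : ((i : ℕ) + 1) * q ≤ m * q := Nat.mul_le_mul_right _ i.isLt
  have hexp : ((i : ℕ) + 1) * q = (i : ℕ) * q + q := by ring
  have h1 : ¬ ((c : ℕ) < C - 1) := by omega
  have h2 : (c : ℕ) < C - 1 + m * q := by omega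
  have h3 : (c : ℕ) - (C - 1) = q * (i : ℕ) + t := by omega
  have hdiv : ((c : ℕ) - (C-1)) / q = (i : ℕ) := by
    rw [h3, Nat.mul_add_div hq, Nat.div_eq_of_lt ht, Nat.add_zero]
  have hmod : ((c : ℕ) - (C-1)) % q = t := by
    rw [h3, Nat.mul_add_mod, Nat.mod_eq_of_lt ht]
  simp only [strB, if_neg h1, if_pos h2, hdiv, hmod, dif_pos i.isLt, Fin.eta]

lemma conflict_char {d C q m : ℕ} (hq : 0 < q) {n n' : ℕ} {S S' : Finset (Fin m)}
    {f f' : Fin m → Fin (q+1)} (c : Fin d) (b : Bool)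
    (hx : strB d C q m n S f c = some b) (hy : strB d C q m n' S' f' c = some !b) :
    ((c : ℕ) < C - 1 ∧ n ≠ n' ∧ (c : ℕ) = min n n') ∨
    (∃ i : Fin m, i ∈ S ∧ i ∈ S' ∧ (f i : ℕ) ≠ (f' i : ℕ) ∧
      (c : ℕ) = C - 1 + (i : ℕ) * q + min (f i : ℕ) (f' i : ℕ)) := by
  by_cases h1 : (c : ℕ) < C - 1
  · left
    simp only [strB, if_pos h1] at hx hy
    have : n ≠ n' ∧ (c : ℕ) = min n n' := by
      cases b <;> split_ifs at hx hy <;> simp_all <;> omega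
    exact ⟨h1, this.1, this.2⟩
  · by_cases h2 : (c : ℕ) < C - 1 + m * q
    · right
      have hi : ((c : ℕ) - (C-1)) / q < m := by
        rw [Nat.div_lt_iff_lt_mul hq]; omega
      simp only [strB, if_neg h1, if_pos h2, dif_pos hi] at hx hy
      set i : Fin m := ⟨((c : ℕ) - (C-1)) / q, hi⟩ with hidef
      have hval : (i : ℕ) = ((c : ℕ) - (C-1)) / q := rfl
      by_cases hiS : i ∈ S
      · by_cases hiS' : i ∈ S'
        · rw [if_pos hiS] at hx; rw [if_pos hiS'] at hy
          have key : (f i : ℕ) ≠ (f' i : ℕ) ∧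
              ((c : ℕ) - (C-1)) % q = min (f i : ℕ) (f' i : ℕ) := by
            cases b <;> split_ifs at hx hy <;> simp_all <;> omega
          refine ⟨i, hiS, hiS', key.1, ?_⟩
          have hdm := Nat.div_add_mod ((c : ℕ) - (C-1)) q
          have hiq2 : (i : ℕ) * q = q * (((c : ℕ) - (C-1)) / q) := by rw [hval, Nat.mul_comm]
          omega
        · rw [if_neg hiS'] at hy; exact absurd hy (by simp)
      · rw [if_neg hiS] at hx; exact absurd hx (by simp)
    · simp only [strB, if_neg h1, if_neg h2] at hx; exact absurd hx (by simp)

end AuxNB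

lemma card_vanish {m q : ℕ} (S : Finset (Fin m)) :
    ((univ : Finset (Fin m → Fin (q+1))).filter (fun f => ∀ i ∉ S, f i = 0)).card
      = (q+1) ^ S.card := by
  classical
  have hcf : (q+1) ^ S.card = Fintype.card (S → Fin (q+1)) := by
    simp [Fintype.card_fun]
  rw [hcf, ← Finset.card_univ]
  apply Finset.card_nbij' (fun f (i : S) => f i)
      (fun g i => if h : i ∈ S then g ⟨i, h⟩ else 0)
  · intro f _; exact mem_univ _
  · intro g _
    simp only [mem_coe, mem_filter, mem_univ, true_and]
    intro i hi; rw [dif_neg hi]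
  · intro f hf
    simp only [mem_coe, mem_filter, mem_univ, true_and] at hf
    funext i
    by_cases h : i ∈ S
    · simp [dif_pos h]
    · beta_reduce; rw [dif_neg h, hf i h]
  · intro g _
    funext i
    simp [dif_pos i.2]

lemma Dd_le_k {d C q m k : ℕ} (hq : 0 < q) {n n' : ℕ} {S S' : Finset (Fin m)}
    {f f' : Fin m → Fin (q+1)} (hk : 1 ≤ k) (hS : S.card = k) (hS' : S'.card = k)
    (hnn : S = S' → n = n') :
    Dd (strB d C q m n S f) (strB d C q m n' S' f') ≤ k := by
  classical
  set Z := (univ : Finset (Fin d)).filter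
      (fun c => ∃ b : Bool, strB d C q m n S f c = some b ∧ strB d C q m n' S' f' c = some !b)
      with hZ
  have hZc : Dd (strB d C q m n S f) (strB d C q m n' S' f') = Z.card := rfl
  rw [hZc]
  have hchar : ∀ c ∈ Z, ((c : ℕ) < C - 1 ∧ n ≠ n' ∧ (c : ℕ) = min n n') ∨
      (∃ i : Fin m, i ∈ S ∧ i ∈ S' ∧ (f i : ℕ) ≠ (f' i : ℕ) ∧
        (c : ℕ) = C - 1 + (i : ℕ) * q + min (f i : ℕ) (f' i : ℕ)) := by
    intro c hc
    obtain ⟨b, hx, hy⟩ := (mem_filter.mp hc).2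
    exact conflict_char hq c b hx hy
  set ψ : Fin d → ℕ := fun c => if (c : ℕ) < C - 1 then m else ((c : ℕ) - (C-1)) / q with hψ
  have hψblock : ∀ (c : Fin d) (i : Fin m) (t : ℕ), t < q →
      (c : ℕ) = C - 1 + (i : ℕ) * q + t → ψ c = (i : ℕ) := by
    intro c i t ht hc
    have hcm : (i : ℕ) * q = q * (i : ℕ) := Nat.mul_comm _ _
    have h1 : ¬ ((c : ℕ) < C - 1) := by omega
    have h3 : (c : ℕ) - (C - 1) = q * (i : ℕ) + t := by omega
    simp only [hψ, if_neg h1, h3, Nat.mul_add_div hq, Nat.div_eq_of_lt ht, Nat.add_zero]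
  have hmin_lt : ∀ (i : Fin m), (f i : ℕ) ≠ (f' i : ℕ) → min (f i : ℕ) (f' i : ℕ) < q := by
    intro i hne
    have := (f i).isLt; have := (f' i).isLt; omega
  have hinj : Set.InjOn ψ ↑Z := by
    intro c hc c' hc' he
    rcases hchar c (by exact_mod_cast hc) with ⟨h1, h2, h3⟩ | ⟨i, _, _, hne, hce⟩ <;>
      rcases hchar c' (by exact_mod_cast hc') with ⟨h1', h2', h3'⟩ | ⟨i', _, _, hne', hce'⟩
    · exact Fin.ext (by omega)
    · exfalso
      have e1 : ψ c = m := by simp [hψ, h1]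
      have e2 : ψ c' = (i' : ℕ) := hψblock c' i' _ (hmin_lt i' hne') hce'
      have := i'.isLt; omega
    · exfalso
      have e1 : ψ c' = m := by simp [hψ, h1']
      have e2 : ψ c = (i : ℕ) := hψblock c i _ (hmin_lt i hne) hce
      have := i.isLt; omega
    · have e1 : ψ c = (i : ℕ) := hψblock c i _ (hmin_lt i hne) hce
      have e2 : ψ c' = (i' : ℕ) := hψblock c' i' _ (hmin_lt i' hne') hce'
      have hii : i = i' := Fin.ext (by omega)
      subst hii
      exact Fin.ext (by omega)
  by_cases hSS : S = S'
  · subst hSS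
    have hnn' := hnn rfl
    subst hnn'
    have hmap : ∀ c ∈ Z, ψ c ∈ S.image (Fin.val) := by
      intro c hc
      rcases hchar c hc with ⟨_, h2, _⟩ | ⟨i, hi, _, hne, hce⟩
      · exact absurd rfl h2
      · rw [hψblock c i _ (hmin_lt i hne) hce]
        exact mem_image_of_mem _ hi
    calc Z.card ≤ (S.image Fin.val).card := card_le_card_of_injOn ψ hmap hinj
      _ = S.card := card_image_of_injective _ Fin.val_injective
      _ = k := hS
  · have hint : (S ∩ S').card + 1 ≤ k := by
      have hsub : S ∩ S' ⊆ S := inter_subset_left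
      have hle : (S ∩ S').card ≤ k := hS ▸ card_le_card hsub
      rcases Nat.lt_or_ge (S ∩ S').card k with h | h
      · omega
      · exfalso
        have h1 : S ∩ S' = S := eq_of_subset_of_card_le hsub (by omega)
        have h2 : S ⊆ S' := inter_eq_left.mp h1
        exact hSS (eq_of_subset_of_card_le h2 (by omega))
    have hmap : ∀ c ∈ Z, ψ c ∈ insert m ((S ∩ S').image Fin.val) := by
      intro c hc
      rcases hchar c hc with ⟨h1, _, _⟩ | ⟨i, hi, hi', hne, hce⟩
      · simp [hψ, h1]
      · rw [hψblock c i _ (hmin_lt i hne) hce]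
        exact mem_insert_of_mem (mem_image_of_mem _ (mem_inter.mpr ⟨hi, hi'⟩))
    calc Z.card ≤ (insert m ((S ∩ S').image Fin.val)).card :=
          card_le_card_of_injOn ψ hmap hinj
      _ ≤ ((S ∩ S').image Fin.val).card + 1 := card_insert_le _ _
      _ = (S ∩ S').card + 1 := by rw [card_image_of_injective _ Fin.val_injective]
      _ ≤ k := hint

lemma Dd_ge_one {d C q m : ℕ} (hq : 0 < q) (hCd : C - 1 + m * q ≤ d) (hm : 0 < m)
    {n n' : ℕ} {S S' : Finset (Fin m)} {f f' : Fin m → Fin (q+1)}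
    (h : (n < C ∧ n' < C ∧ n ≠ n') ∨ (S = S' ∧ ∃ i ∈ S, (f i : ℕ) ≠ (f' i : ℕ))) :
    1 ≤ Dd (strB d C q m n S f) (strB d C q m n' S' f') := by
  classical
  rw [Dd]
  have hmq : 0 < m * q := Nat.mul_pos hm hq
  rcases h with ⟨hn, hn', hne⟩ | ⟨hSS, i, hi, hne⟩
  · have hlt : min n n' < C - 1 := by omega
    have hcd : min n n' < d := by omega
    set c : Fin d := ⟨min n n', hcd⟩ with hcdef
    have hcv : (c : ℕ) = min n n' := rfl
    rcases Nat.lt_or_ge n n' with h2 | h2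
    · have hxval : strB d C q m n S f c = some false := by
        simp only [strB, hcv]
        rw [if_pos hlt, if_neg (by omega), if_pos (by omega)]
      have hyval : strB d C q m n' S' f' c = some true := by
        simp only [strB, hcv]
        rw [if_pos hlt, if_pos (by omega)]
      exact card_pos.mpr ⟨c, mem_filter.mpr ⟨mem_univ _, false, hxval, by simpa using hyval⟩⟩
    · have hxval : strB d C q m n S f c = some true := by
        simp only [strB, hcv]
        rw [if_pos hlt, if_pos (by omega)]
      have hyval : strB d C q m n' S' f' c = some false := by
        simp only [strB, hcv]
        rw [if_pos hlt, if_neg (by omega), if_pos (by omega)]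
      exact card_pos.mpr ⟨c, mem_filter.mpr ⟨mem_univ _, true, hxval, by simpa using hyval⟩⟩
  · have hfi := (f i).isLt; have hfi' := (f' i).isLt
    set t := min (f i : ℕ) (f' i : ℕ) with htdef
    have ht : t < q := by omega
    have hmul : ((i : ℕ) + 1) * q ≤ m * q := Nat.mul_le_mul_right _ i.isLt
    have hexp : ((i : ℕ) + 1) * q = (i : ℕ) * q + q := by ring
    have hcd : C - 1 + (i : ℕ) * q + t < d := by omega
    set c : Fin d := ⟨C - 1 + (i : ℕ) * q + t, hcd⟩ with hcdef
    have hx := strB_block (n := n) (S := S) (f := f) hq i t ht c rfl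
    have hy := strB_block (n := n') (S := S') (f := f') hq i t ht c rfl
    rw [if_pos hi] at hx
    rw [if_pos (hSS ▸ hi)] at hy
    rcases Nat.lt_or_ge (f i : ℕ) (f' i : ℕ) with h2 | h2
    · rw [if_neg (by omega), if_pos (by omega)] at hx
      rw [if_pos (by omega)] at hy
      exact card_pos.mpr ⟨c, mem_filter.mpr ⟨mem_univ _, false, hx, by simpa using hy⟩⟩
    · rw [if_pos (by omega)] at hx
      rw [if_neg (by omega), if_pos (by omega)] at hy
      exact card_pos.mpr ⟨c, mem_filter.mpr ⟨mem_univ _, true, hx, by simpa using hy⟩⟩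

theorem stmt_13 {k m d : ℕ} (hk : 2 ≤ k) (hkm : k ≤ m) (hmd : m ≤ d)
    (hd : m.choose k - 1 + m ≤ d) :
    ((d + 1 - m.choose k : ℕ) : ℝ) ^ k * (m.choose k : ℝ) / (m : ℝ) ^ k
      ≤ (nbox k d : ℝ) := by
  classical
  set C := m.choose k with hC
  have hm : 0 < m := by omega
  have hC1 : 1 ≤ C := Nat.choose_pos hkm
  set q := (d + 1 - C) / m with hqdef
  have hd'm : m ≤ d + 1 - C := by omega
  have hq : 0 < q := (Nat.one_le_div_iff hm).mpr hd'm
  have hqm : q * m ≤ d + 1 - C := Nat.div_mul_le_self _ _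
  have hCd : C - 1 + m * q ≤ d := by
    have h2 : m * q = q * m := Nat.mul_comm _ _
    omega
  -- index set
  set A : Finset (Σ _ : Finset (Fin m), (Fin m → Fin (q+1))) :=
    (powersetCard k (univ : Finset (Fin m))).sigma
      (fun S => (univ : Finset (Fin m → Fin (q+1))).filter (fun f => ∀ i ∉ S, f i = 0))
    with hA
  have hAcard : A.card = C * (q+1) ^ k := by
    rw [hA, card_sigma]
    rw [Finset.sum_congr rfl (fun S hS => by
      rw [card_vanish S, (mem_powersetCard_univ.mp hS : S.card = k)])]
    rw [sum_const, card_powersetCard, card_univ, Fintype.card_fin, smul_eq_mul]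
  have hinjA : Set.InjOn
      (fun p : Σ _ : Finset (Fin m), (Fin m → Fin (q+1)) =>
        strB d C q m (NIdx k m p.1) p.1 p.2) ↑A := by
    rintro ⟨S, f⟩ hp ⟨S', f'⟩ hp' he
    simp only at he
    rw [mem_coe, hA, mem_sigma] at hp hp'
    have hvan : ∀ i ∉ S, f i = 0 := (mem_filter.mp hp.2).2
    have hvan' : ∀ i ∉ S', f' i = 0 := (mem_filter.mp hp'.2).2
    have hSS : S = S' := by
      ext i
      have hmul : ((i : ℕ) + 1) * q ≤ m * q := Nat.mul_le_mul_right _ i.isLt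
      have hexp : ((i : ℕ) + 1) * q = (i : ℕ) * q + q := by ring
      have hcd : C - 1 + (i : ℕ) * q + 0 < d := by omega
      set c : Fin d := ⟨C - 1 + (i : ℕ) * q + 0, hcd⟩ with hcdef
      have hx := strB_block (n := NIdx k m S) (S := S) (f := f) hq i 0 hq c rfl
      have hy := strB_block (n := NIdx k m S') (S := S') (f := f') hq i 0 hq c rfl
      have hxy := congrFun he c
      rw [hx, hy] at hxy
      constructor
      · intro hmem
        by_contra hns
        rw [if_pos hmem, if_neg hns] at hxy
        split_ifs at hxy with h1 h2
        all_goals first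
          | omega
          | simp at hxy
      · intro hmem
        by_contra hns
        rw [if_neg hns, if_pos hmem] at hxy
        split_ifs at hxy with h1 h2
        all_goals first
          | omega
          | simp at hxy
    subst hSS
    have hff : f = f' := by
      funext i
      by_cases hiS : i ∈ S
      · by_contra hne0
        have hne : (f i : ℕ) ≠ (f' i : ℕ) := fun h => hne0 (Fin.val_injective h)
        have hfi := (f i).isLt
        have hfi' := (f' i).isLt
        set t := min (f i : ℕ) (f' i : ℕ) with htdef
        have ht : t < q := by omega
        have hmul : ((i : ℕ) + 1) * q ≤ m * q := Nat.mul_le_mul_right _ i.isLt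
        have hexp : ((i : ℕ) + 1) * q = (i : ℕ) * q + q := by ring
        have hcd : C - 1 + (i : ℕ) * q + t < d := by omega
        set c : Fin d := ⟨C - 1 + (i : ℕ) * q + t, hcd⟩ with hcdef
        have hx := strB_block (n := NIdx k m S) (S := S) (f := f) hq i t ht c rfl
        have hy := strB_block (n := NIdx k m S) (S := S) (f := f') hq i t ht c rfl
        have hxy := congrFun he c
        rw [hx, hy, if_pos hiS, if_pos hiS] at hxy
        rcases Nat.lt_or_ge (f i : ℕ) (f' i : ℕ) with h2 | h2
        · rw [if_neg (show ¬ t < (f i : ℕ) by omega),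
              if_pos (show t = (f i : ℕ) by omega),
              if_pos (show t < (f' i : ℕ) by omega)] at hxy
          exact absurd hxy (by simp)
        · rw [if_pos (show t < (f i : ℕ) by omega),
              if_neg (show ¬ t < (f' i : ℕ) by omega),
              if_pos (show t = (f' i : ℕ) by omega)] at hxy
          exact absurd hxy (by simp)
      · rw [hvan i hiS, hvan' i hiS]
    rw [hff]
  set F : Finset (Fin d → Option Bool) :=
    A.image (fun p => strB d C q m (NIdx k m p.1) p.1 p.2) with hF
  have hFcard : F.card = C * (q+1) ^ k := by
    rw [hF, card_image_of_injOn hinjA, hAcard]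
  have hNbly : Nbly k F := by
    intro x hx y hy hxy
    obtain ⟨p, hp, rfl⟩ := mem_image.mp hx
    obtain ⟨p', hp', rfl⟩ := mem_image.mp hy
    have hpne : p ≠ p' := by rintro rfl; exact hxy rfl
    rw [hA, mem_sigma] at hp hp'
    have hp1 := hp.1
    have hp1' := hp'.1
    have hvan : ∀ i ∉ p.1, p.2 i = 0 := (mem_filter.mp hp.2).2
    have hvan' : ∀ i ∉ p'.1, p'.2 i = 0 := (mem_filter.mp hp'.2).2
    constructor
    · apply Dd_ge_one hq hCd hm
      by_cases hss : p.1 = p'.1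
      · right
        refine ⟨hss, ?_⟩
        have hff : p.2 ≠ p'.2 := by
          intro h
          exact hpne (Sigma.ext hss (heq_of_eq h))
        obtain ⟨i, hi⟩ := Function.ne_iff.mp hff
        have hiS : i ∈ p.1 := by
          by_contra hns
          exact hi ((hvan i hns).trans ((hvan' i (hss ▸ hns)).symm))
        exact ⟨i, hiS, fun h => hi (Fin.val_injective h)⟩
      · left
        exact ⟨NIdx_lt hp1, NIdx_lt hp1', fun h => hss (NIdx_inj hp1 hp1' h)⟩
    · exact Dd_le_k hq (by omega) (mem_powersetCard_univ.mp hp1)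
        (mem_powersetCard_univ.mp hp1') (fun h => congrArg (NIdx k m) h)
  have hbdd : BddAbove {n | ∃ F : Finset (Fin d → Option Bool), Nbly k F ∧ F.card = n} := by
    refine ⟨Fintype.card (Fin d → Option Bool), ?_⟩
    rintro x ⟨F', _, rfl⟩
    exact (card_le_univ F').trans_eq card_univ
  have hle : F.card ≤ nbox k d := le_csSup hbdd ⟨F, hNbly, rfl⟩
  have key : ((C : ℝ)) * ((q : ℝ) + 1) ^ k ≤ (nbox k d : ℝ) := by
    have h1 : C * (q+1) ^ k ≤ nbox k d := hFcard ▸ hle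
    exact_mod_cast h1
  have hdmq : (d + 1 - C : ℕ) ≤ m * (q + 1) := by
    have h1 := Nat.div_add_mod (d + 1 - C) m
    rw [← hqdef] at h1
    have h2 : (d + 1 - C) % m < m := Nat.mod_lt _ hm
    have h3 : m * (q + 1) = m * q + m := by ring
    omega
  have hmpos : (0 : ℝ) < (m : ℝ) ^ k := by positivity
  rw [div_le_iff₀ hmpos]
  have h2 : ((d + 1 - C : ℕ) : ℝ) ^ k ≤ (m : ℝ) ^ k * ((q : ℝ) + 1) ^ k := by
    rw [← mul_pow]
    apply pow_le_pow_left₀ (by positivity)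
    have : ((d + 1 - C : ℕ) : ℝ) ≤ ((m * (q + 1) : ℕ) : ℝ) := by exact_mod_cast hdmq
    push_cast at this
    linarith
  calc ((d + 1 - C : ℕ) : ℝ) ^ k * (C : ℝ)
      ≤ ((m : ℝ) ^ k * ((q : ℝ) + 1) ^ k) * (C : ℝ) := by
        apply mul_le_mul_of_nonneg_right h2 (by positivity)
    _ = ((C : ℝ) * ((q : ℝ) + 1) ^ k) * (m : ℝ) ^ k := by ring
    _ ≤ (nbox k d : ℝ) * (m : ℝ) ^ k := by
        apply mul_le_mul_of_nonneg_right key (le_of_lt hmpos)
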